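/- Every circle graph is a ray intersection graph, realizable with origins on the curve y = x! and directions pointing into the open upper-right quadrant. Precisely: let n be a positive integer, let G be a simple graph on Fin n, and suppose there are ℓ, r : Fin n → ℕ with 1 ≤ ℓ i < r i for all i, all 2n values pairwise distinct, such that for all i ≠ j, G.Adj i j holds if and only if the pairs (ℓ i, r i) and (ℓ j, r j) interleave (i.e. ℓ i < ℓ j < r i < r j or ℓ j < ℓ i < r j < r i). Then there exist p, v : Fin n → ℝ² such that: (1) for every i there is a positive integer x_i with p i = (x_i, x_i!); (2) for every i, both coordinates of v i are strictly positive; and (3) for all i ≠ j, G.Adj i j holds if and only if the rays {p i + t • v i : t ≥ 0} and {p j + t • v j : t ≥ 0} intersect. -/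

import Mathlib

noncomputable def factPt (x : ℕ) : ℝ × ℝ := ((x : ℝ), (Nat.factorial x : ℝ))

def ray (p v : ℝ × ℝ) : Set (ℝ × ℝ) := {z | ∃ t : ℝ, 0 ≤ t ∧ z = p + t • v}

lemma key_slope (a b a' b' : ℕ) (ha : 1 ≤ a) (hab : a < b) (ha' : 1 ≤ a')
    (hab' : a' < b') (hbb' : b < b') :
    ((b.factorial : ℝ) - a.factorial) * ((b' : ℝ) - a') <
      ((b'.factorial : ℝ) - a'.factorial) * ((b : ℝ) - a) := by
  have hm : b' - 1 + 1 = b' := Nat.succ_pred_eq_of_pos (show 0 < b' by omega)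
  have hfb' : (b'.factorial : ℝ) = b' * (((b'-1).factorial : ℕ) : ℝ) := by
    conv_lhs => rw [← hm, Nat.factorial_succ]
    push_cast [hm]; ring
  have h1 : (1:ℝ) ≤ (a.factorial : ℝ) := by exact_mod_cast Nat.one_le_iff_ne_zero.mpr (Nat.factorial_ne_zero a)
  have h2 : (b.factorial : ℝ) ≤ ((b'-1).factorial : ℝ) := by
    exact_mod_cast Nat.factorial_le (by omega)
  have h3 : (a'.factorial : ℝ) ≤ ((b'-1).factorial : ℝ) := by
    exact_mod_cast Nat.factorial_le (by omega)
  have h4 : (1:ℝ) ≤ ((b'-1).factorial : ℝ) := by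
    exact_mod_cast Nat.one_le_iff_ne_zero.mpr (Nat.factorial_ne_zero _)
  have hA : (a:ℝ) + 1 ≤ b := by exact_mod_cast hab
  have hA' : (a':ℝ) + 1 ≤ b' := by exact_mod_cast hab'
  have hB : (b:ℝ) + 1 ≤ b' := by exact_mod_cast hbb'
  have ha'1 : (1:ℝ) ≤ (a':ℝ) := by exact_mod_cast ha'
  have e1 : ((b.factorial : ℝ) - a.factorial) * ((b' : ℝ) - a') ≤
      (((b'-1).factorial : ℝ) - 1) * ((b':ℝ) - 1) :=
    mul_le_mul (by linarith) (by linarith) (by linarith) (by linarith)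
  have h5 : ((b':ℝ) - 1) * ((b'-1).factorial : ℝ) ≤ (b'.factorial : ℝ) - (a'.factorial : ℝ) := by
    rw [hfb']; nlinarith
  have h7 : (0:ℝ) ≤ (b'.factorial : ℝ) - (a'.factorial : ℝ) := by nlinarith
  have e2 := mul_le_mul h5 (by linarith : (1:ℝ) ≤ (b:ℝ) - a) zero_le_one h7
  nlinarith


lemma mem_ray_iff (p v z : ℝ × ℝ) :
    z ∈ ray p v ↔ ∃ t : ℝ, 0 ≤ t ∧ z.1 = p.1 + t * v.1 ∧ z.2 = p.2 + t * v.2 := by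
  simp [ray, Prod.ext_iff, Prod.smul_def, smul_eq_mul]

lemma ordered_case (a b c d : ℕ) (ha : 1 ≤ a) (hac : a < c) (hab : a < b) (hbd : b < d)
    (hbc : b ≠ c) (hcd : c ≠ d) :
    (ray (factPt a) (factPt c - factPt a) ∩ ray (factPt b) (factPt d - factPt b)).Nonempty
      ↔ (b < c ∧ c < d) := by
  have hb : 1 ≤ b := le_of_lt (lt_of_le_of_lt ha hab)
  set Fa : ℝ := (a.factorial : ℝ) with hFa
  set Fb : ℝ := (b.factorial : ℝ) with hFb
  set Fc : ℝ := (c.factorial : ℝ) with hFc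
  set Fd : ℝ := (d.factorial : ℝ) with hFd
  have hv1 : factPt c - factPt a = (((c:ℝ) - a), (Fc - Fa)) := by
    simp [factPt, Prod.ext_iff, hFa, hFc]
  have hv2 : factPt d - factPt b = (((d:ℝ) - b), (Fd - Fb)) := by
    simp [factPt, Prod.ext_iff, hFb, hFd]
  constructor
  · rintro ⟨z, hz1, hz2⟩
    rw [mem_ray_iff] at hz1 hz2
    obtain ⟨t, ht, hz11, hz12⟩ := hz1
    obtain ⟨s, hs, hz21, hz22⟩ := hz2
    rw [hv1] at hz11 hz12
    rw [hv2] at hz21 hz22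
    simp only [factPt] at hz11 hz12 hz21 hz22
    have eq1 : (a:ℝ) + t * ((c:ℝ) - a) = (b:ℝ) + s * ((d:ℝ) - b) := by
      rw [← hz11, ← hz21]
    have eq2 : Fa + t * (Fc - Fa) = Fb + s * (Fd - Fb) := by
      rw [← hz12, ← hz22]
    have hid : (Fc - Fa) * ((b:ℝ) - a) - ((c:ℝ) - a) * (Fb - Fa)
        = s * (((c:ℝ) - a) * (Fd - Fb) - (Fc - Fa) * ((d:ℝ) - b)) := by
      linear_combination ((c:ℝ) - a) * eq2 - (Fc - Fa) * eq1
    rcases lt_trichotomy b c with h1 | h1 | h1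
    · refine ⟨h1, ?_⟩
      rcases lt_trichotomy c d with h2 | h2 | h2
      · exact h2
      · exact absurd h2 hcd
      · -- nested case: contradiction
        exfalso
        have K1 := key_slope a b a c ha hab ha hac h1
        have K2 := key_slope b d a c hb hbd ha hac h2
        have hX : ((c:ℝ) - a) * (Fd - Fb) - (Fc - Fa) * ((d:ℝ) - b) ≤ 0 := by linarith
        have hprod : s * (((c:ℝ) - a) * (Fd - Fb) - (Fc - Fa) * ((d:ℝ) - b)) ≤ 0 :=
          mul_nonpos_iff.mpr (Or.inl ⟨hs, hX⟩)
        linarith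
    · exact absurd h1 hbc
    · -- disjoint case: contradiction
      exfalso
      have hcd' : c < d := lt_trans h1 hbd
      have K1 := key_slope a c a b ha hac ha hab h1
      have K2 := key_slope a c b d ha hac hb hbd hcd'
      have hX : 0 ≤ ((c:ℝ) - a) * (Fd - Fb) - (Fc - Fa) * ((d:ℝ) - b) := by linarith
      have hprod : 0 ≤ s * (((c:ℝ) - a) * (Fd - Fb) - (Fc - Fa) * ((d:ℝ) - b)) :=
        mul_nonneg hs hX
      linarith
  · rintro ⟨hbc', hcd'⟩
    have KD := key_slope a c b d ha hac hb hbd hcd'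
    have KNt := key_slope a b b d ha hab hb hbd hbd
    have KNs := key_slope a b a c ha hab ha hac hbc'
    set D : ℝ := ((c:ℝ) - a) * (Fd - Fb) - (Fc - Fa) * ((d:ℝ) - b) with hDdef
    set Nt : ℝ := (Fd - Fb) * ((b:ℝ) - a) - (Fb - Fa) * ((d:ℝ) - b) with hNtdef
    set Ns : ℝ := (Fc - Fa) * ((b:ℝ) - a) - (Fb - Fa) * ((c:ℝ) - a) with hNsdef
    have hD : 0 < D := by rw [hDdef]; linarith
    have hNt : 0 < Nt := by rw [hNtdef]; linarith
    have hNs : 0 < Ns := by rw [hNsdef]; linarith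
    refine ⟨((a:ℝ) + (Nt / D) * ((c:ℝ) - a), Fa + (Nt / D) * (Fc - Fa)), ?_, ?_⟩
    · rw [mem_ray_iff]
      exact ⟨Nt / D, le_of_lt (div_pos hNt hD), by rw [hv1]; simp [factPt], by rw [hv1]; simp [factPt, hFa]⟩
    · rw [mem_ray_iff]
      refine ⟨Ns / D, le_of_lt (div_pos hNs hD), ?_, ?_⟩
      · rw [hv2]; simp only [factPt]
        field_simp
        simp only [hDdef, hNtdef, hNsdef, hFa, hFb, hFc, hFd]
        ring_nf
      · rw [hv2]; simp only [factPt]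
        field_simp
        simp only [hDdef, hNtdef, hNsdef, hFa, hFb, hFc, hFd]
        ring_nf

theorem stmt_6 (n : ℕ) (hn : 0 < n) (G : SimpleGraph (Fin n))
    (ℓ r : Fin n → ℕ)
    (hlr : ∀ i, 1 ≤ ℓ i ∧ ℓ i < r i)
    (hinj : Function.Injective (Sum.elim ℓ r : Fin n ⊕ Fin n → ℕ))
    (hadj : ∀ i j, i ≠ j → (G.Adj i j ↔
      ((ℓ i < ℓ j ∧ ℓ j < r i ∧ r i < r j) ∨ (ℓ j < ℓ i ∧ ℓ i < r j ∧ r j < r i)))) :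
    ∃ p v : Fin n → ℝ × ℝ,
      (∀ i, ∃ x : ℕ, 0 < x ∧ p i = factPt x) ∧
      (∀ i, 0 < (v i).1 ∧ 0 < (v i).2) ∧
      (∀ i j, i ≠ j → (G.Adj i j ↔ (ray (p i) (v i) ∩ ray (p j) (v j)).Nonempty)) := by
  refine ⟨fun i => factPt (ℓ i), fun i => factPt (r i) - factPt (ℓ i), ?_, ?_, ?_⟩
  · exact fun i => ⟨ℓ i, (hlr i).1, rfl⟩
  · intro i
    have h1 := (hlr i).1
    have h2 := (hlr i).2
    have hf : (Nat.factorial (ℓ i) : ℝ) < (Nat.factorial (r i) : ℝ) := by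
      exact_mod_cast (Nat.factorial_lt (by omega)).mpr h2
    have hx : ((ℓ i : ℝ)) < (r i : ℝ) := by exact_mod_cast h2
    constructor
    · simpa [factPt] using sub_pos.mpr hx
    · simpa [factPt] using sub_pos.mpr hf
  · intro i j hij
    have hLij : ℓ i ≠ ℓ j := by
      intro e
      have h := hinj (a₁ := Sum.inl i) (a₂ := Sum.inl j) (by simpa using e)
      exact hij (by simpa using h)
    have hlr_ne : ∀ a b : Fin n, ℓ a ≠ r b := by
      intro a b e
      have h := hinj (a₁ := Sum.inl a) (a₂ := Sum.inr b) (by simpa using e)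
      simp at h
    have hr_ne : ∀ a b : Fin n, a ≠ b → r a ≠ r b := by
      intro a b hne e
      have h := hinj (a₁ := Sum.inr a) (a₂ := Sum.inr b) (by simpa using e)
      exact hne (by simpa using h)
    rcases lt_or_gt_of_ne hLij with h | h
    · rw [hadj i j hij, ordered_case (ℓ i) (ℓ j) (r i) (r j) (hlr i).1 (hlr i).2 h
        (hlr j).2 (hlr_ne j i) (hr_ne i j hij)]
      constructor <;> intro hh <;> omega
    · rw [Set.inter_comm, hadj i j hij, ordered_case (ℓ j) (ℓ i) (r j) (r i) (hlr j).1
        (hlr j).2 h (hlr i).2 (hlr_ne i j) (hr_ne j i (Ne.symm hij))]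
      constructor <;> intro hh <;> omega
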